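/- In a history graph, if a geodesic between two vertices goes up a vertical edge, traverses a horizontal path in level n, and then goes down a vertical edge, it can be strictly shortened; hence in any geodesic all downward vertical edges occur before all upward vertical edges. -/

import Mathlib

namespace HGaux

variable {V : ℕ → Type*}

/-- The "parent" map on the whole vertex set. -/
def par (f : ∀ k : ℕ, V (k + 1) → V k) :
    (Unit ⊕ (Σ n : ℕ, V n)) → (Unit ⊕ (Σ n : ℕ, V n))
  | Sum.inl _ => Sum.inl ()
  | Sum.inr ⟨0, _⟩ => Sum.inl ()
  | Sum.inr ⟨k+1, v⟩ => Sum.inr ⟨k, f k v⟩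

variable {G : SimpleGraph (Unit ⊕ (Σ n : ℕ, V n))}
variable (f : ∀ k : ℕ, V (k + 1) → V k)

def lv : (Unit ⊕ (Σ n : ℕ, V n)) → ℕ := Sum.elim (fun _ => 0) (fun p => p.1 + 1)

theorem par_down
    (hvert : ∀ (k : ℕ) (v : V (k + 1)) (u : V k),
      G.Adj (Sum.inr ⟨k + 1, v⟩) (Sum.inr ⟨k, u⟩) ↔ u = f k v)
    {x y : Unit ⊕ (Σ n : ℕ, V n)} (hxy : G.Adj x y) (h : lv y + 1 = lv x) :
    par f x = y := by
  rcases x with u | ⟨m, v⟩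
  · simp [lv] at h
  · rcases y with u' | ⟨k, w⟩
    · simp [lv] at h
      subst h
      rfl
    · simp [lv] at h
      subst h
      have := (hvert k v w).mp hxy
      simp [par, this]

theorem par_horiz
    (hlip : ∀ (k : ℕ) (u v : V (k + 1)),
      G.Adj (Sum.inr ⟨k + 1, u⟩) (Sum.inr ⟨k + 1, v⟩) →
        f k u = f k v ∨ G.Adj (Sum.inr ⟨k, f k u⟩) (Sum.inr ⟨k, f k v⟩))
    {x y : Unit ⊕ (Σ n : ℕ, V n)} (hxy : G.Adj x y) (h : lv x = lv y) :
    par f x = par f y ∨ G.Adj (par f x) (par f y) := by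
  rcases x with u | ⟨m, v⟩
  · rcases y with u' | ⟨k, w⟩
    · left; rfl
    · simp [lv] at h
  · rcases y with u' | ⟨k, w⟩
    · simp [lv] at h
    · simp [lv] at h
      subst h
      cases m with
      | zero => left; rfl
      | succ n =>
        rcases hlip n v w hxy with h1 | h1
        · left; simp [par, h1]
        · right; exact h1

/-- Lemma E: project off a horizontal prefix followed by a down edge. -/
theorem shorten
    (hvert : ∀ (k : ℕ) (v : V (k + 1)) (u : V k),
      G.Adj (Sum.inr ⟨k + 1, v⟩) (Sum.inr ⟨k, u⟩) ↔ u = f k v)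
    (hlip : ∀ (k : ℕ) (u v : V (k + 1)),
      G.Adj (Sum.inr ⟨k + 1, u⟩) (Sum.inr ⟨k + 1, v⟩) →
        f k u = f k v ∨ G.Adj (Sum.inr ⟨k, f k u⟩) (Sum.inr ⟨k, f k v⟩))
    {x y : Unit ⊕ (Σ n : ℕ, V n)} (p : G.Walk x y) :
    ∀ j : ℕ, ∀ dj : G.Dart, p.darts[j]? = some dj →
      lv dj.toProd.2 + 1 = lv dj.toProd.1 →
      (∀ k < j, ∀ d : G.Dart, p.darts[k]? = some d → lv d.toProd.1 = lv d.toProd.2) →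
      ∃ q : G.Walk (par f x) y, q.length + 1 ≤ p.length := by
  induction p with
  | nil => intro j dj hdj _ _; simp at hdj
  | @cons x c y h p ih =>
    intro j dj hdj hdown hpre
    cases j with
    | zero =>
      simp [SimpleGraph.Walk.darts_cons] at hdj
      subst hdj
      simp at hdown
      have hc : par f x = c := par_down f hvert h hdown
      exact ⟨p.copy hc.symm rfl, by simp⟩
    | succ j =>
      simp only [SimpleGraph.Walk.darts_cons, List.getElem?_cons_succ] at hdj
      have h0 : lv x = lv c := by
        have := hpre 0 (Nat.succ_pos j) ⟨(x, c), h⟩ (by simp)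
        simpa using this
      have hpre' : ∀ k < j, ∀ d : G.Dart, p.darts[k]? = some d →
          lv d.toProd.1 = lv d.toProd.2 := by
        intro k hk d hd
        exact hpre (k+1) (by omega) d (by simpa using hd)
      obtain ⟨q, hq⟩ := ih j dj hdj hdown hpre'
      rcases par_horiz f hlip h h0 with he | ha
      · exact ⟨q.copy he.symm rfl, by simp; omega⟩
      · exact ⟨SimpleGraph.Walk.cons ha q, by simp; omega⟩

end HGaux

/-- In a history graph (levels `V n` plus an origin, unique parent of each vertex,
parent maps 1-Lipschitz on levels), in any geodesic all downward vertical edges occur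
before all upward vertical edges: there is no upward edge appearing earlier in the
walk than a downward edge. -/
theorem history_graph_geodesic_down_before_up (V : ℕ → Type*)
    (G : SimpleGraph (Unit ⊕ (Σ n : ℕ, V n)))
    (lvl : (Unit ⊕ (Σ n : ℕ, V n)) → ℕ)
    (hlvl : lvl = Sum.elim (fun _ => 0) (fun p => p.1 + 1))
    (hadj : ∀ a b, G.Adj a b → lvl a = lvl b ∨ lvl a + 1 = lvl b ∨ lvl b + 1 = lvl a)
    (horig : ∀ v : V 0, G.Adj (Sum.inl ()) (Sum.inr ⟨0, v⟩))
    (f : ∀ k : ℕ, V (k + 1) → V k)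
    (hvert : ∀ (k : ℕ) (v : V (k + 1)) (u : V k),
      G.Adj (Sum.inr ⟨k + 1, v⟩) (Sum.inr ⟨k, u⟩) ↔ u = f k v)
    (hlip : ∀ (k : ℕ) (u v : V (k + 1)),
      G.Adj (Sum.inr ⟨k + 1, u⟩) (Sum.inr ⟨k + 1, v⟩) →
        f k u = f k v ∨ G.Adj (Sum.inr ⟨k, f k u⟩) (Sum.inr ⟨k, f k v⟩))
    {a b : Unit ⊕ (Σ n : ℕ, V n)} (w : G.Walk a b)
    (hgeo : w.length = G.dist a b) :
    ∀ i j : ℕ, i < j →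
      ∀ di dj : G.Dart, w.darts[i]? = some di → w.darts[j]? = some dj →
        ¬(lvl di.toProd.1 + 1 = lvl di.toProd.2 ∧ lvl dj.toProd.2 + 1 = lvl dj.toProd.1) := by
  subst hlvl
  classical
  induction w with
  | nil => intro i j hij di dj hdi hdj; simp at hdi
  | @cons a c b h w ih =>
    intro i j hij di dj hdi hdj hud
    -- tail is a geodesic
    have hdcb : G.dist c b ≤ w.length := SimpleGraph.dist_le w
    obtain ⟨q0, hq0⟩ := (SimpleGraph.Walk.reachable w).exists_walk_length_eq_dist
    have hdab : G.dist a b ≤ G.dist c b + 1 := by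
      have := SimpleGraph.dist_le (SimpleGraph.Walk.cons h q0)
      simpa [hq0] using this
    have hlen : (SimpleGraph.Walk.cons h w).length = w.length + 1 := by simp
    have hgeo' : w.length = G.dist c b := by omega
    cases i with
    | succ i =>
      cases j with
      | zero => omega
      | succ j =>
        simp only [SimpleGraph.Walk.darts_cons, List.getElem?_cons_succ] at hdi hdj
        exact ih hgeo' i j (by omega) di dj hdi hdj hud
    | zero =>
      simp only [SimpleGraph.Walk.darts_cons, List.getElem?_cons_zero,
        Option.some.injEq] at hdi
      subst hdi
      simp only [SimpleGraph.Dart.toProd] at hud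
      obtain ⟨hup, hdown⟩ := hud
      -- find minimal down dart of the whole walk
      set W := SimpleGraph.Walk.cons h w with hW
      have hPex : ∃ n : ℕ, ∃ d : G.Dart, W.darts[n]? = some d ∧
          HGaux.lv d.toProd.2 + 1 = HGaux.lv d.toProd.1 := ⟨j, dj, hdj, hdown⟩
      set j0 := Nat.find hPex with hj0def
      obtain ⟨d0, hd0, hd0down⟩ := Nat.find_spec hPex
      rw [← hj0def] at hd0
      have hj0min : ∀ k < j0, ∀ d : G.Dart, W.darts[k]? = some d →
          ¬ (HGaux.lv d.toProd.2 + 1 = HGaux.lv d.toProd.1) := by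
        intro k hk d hd hdn
        exact Nat.find_min hPex hk ⟨d, hd, hdn⟩
      have hj0pos : 0 < j0 := by
        rcases Nat.eq_zero_or_pos j0 with h0 | h0
        · exfalso
          rw [h0] at hd0
          simp only [hW, SimpleGraph.Walk.darts_cons, List.getElem?_cons_zero,
            Option.some.injEq] at hd0
          subst hd0
          simp only [HGaux.lv, Sum.elim_inl, Sum.elim_inr] at hd0down
          omega
        · exact h0
      have hd0t : w.darts[j0 - 1]? = some d0 := by
        obtain ⟨m, hm⟩ : ∃ m, j0 = m + 1 := ⟨j0 - 1, by omega⟩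
        have hd0' := hd0
        rw [hm, hW] at hd0'
        simp only [SimpleGraph.Walk.darts_cons, List.getElem?_cons_succ] at hd0'
        rw [hm]
        simpa using hd0'
      -- darts of w at indices < j0 - 1 are horizontal
      have hpre : ∀ k < j0 - 1, ∀ d : G.Dart, w.darts[k]? = some d →
          HGaux.lv d.toProd.1 = HGaux.lv d.toProd.2 := by
        intro k hk d hd
        have hadj' := hadj _ _ d.adj
        rcases hadj' with h1 | h1 | h1
        · exact h1
        · -- up dart inside tail before a down dart: contradicts IH on tail
          exact absurd ⟨h1, hd0down⟩ (ih hgeo' k (j0 - 1) (by omega) d d0 hd hd0t)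
        · exact absurd h1 (hj0min (k+1) (by omega) d (by
            simpa [hW, SimpleGraph.Walk.darts_cons] using hd))
      obtain ⟨q, hq⟩ := HGaux.shorten f hvert hlip w (j0 - 1) d0 hd0t hd0down hpre
      -- par f c = a since the first dart goes up from a to c
      have hpc : HGaux.par f c = a :=
        HGaux.par_down f hvert h.symm (by exact hup)
      have hd' := SimpleGraph.dist_le (q.copy hpc rfl)
      rw [SimpleGraph.Walk.length_copy] at hd'
      omega
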